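/- Let F be a finite field of cardinality p^ℓ, 0 ≤ h < ℓ, λ ∈ F^× with λ^{1+p^h} = 1, and R_λ = F[X]/⟨Xⁿ − λ⟩. For g ∈ R_λ, the R_λ-submodule C_{1,g} of R_λ² generated by (1, g) is Galois p^h-self-dual if and only if g·g* = −1, where * is the automorphism a(X) ↦ a^{(p^h)}(X^{nt−1}) mod (Xⁿ − λ) and t is the order of λ in F^×. -/

import Mathlib

open Polynomial

/-- The quotient ring `R_λ = F[X]/⟨Xⁿ − λ⟩`. -/
abbrev Rlam (F : Type*) [Field F] (n : ℕ) (lam : F) :=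
  F[X] ⧸ Ideal.span {(X : F[X]) ^ n - C lam}

/-- The Galois inner product `⟨a,b⟩ = ∑ aᵢ bᵢ^e` on `Fⁿ × Fⁿ`, where `e = p^h`. -/
def gin {F : Type*} [Field F] {n : ℕ} (e : ℕ)
    (a b : (Fin n → F) × (Fin n → F)) : F :=
  (∑ i, a.1 i * b.1 i ^ e) + (∑ i, a.2 i * b.2 i ^ e)

/-- `x ↦ x^q` as a ring hom, given additivity. -/
def frHom (F : Type*) [Field F] (q : ℕ) (hq0 : q ≠ 0)
    (hadd : ∀ x y : F, (x + y) ^ q = x ^ q + y ^ q) : F →+* F where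
  toFun x := x ^ q
  map_one' := one_pow q
  map_mul' x y := mul_pow x y q
  map_zero' := zero_pow hq0
  map_add' := hadd

/-- The canonical projection. -/
noncomputable def rmk (F : Type*) [Field F] (n : ℕ) (lam : F) : F[X] →+* Rlam F n lam :=
  Ideal.Quotient.mk _

noncomputable def SigmaAux {F : Type*} [Field F] (n : ℕ) (lam : F) (fr : F →+* F) (m : ℕ)
    (h0 : rmk F n lam
        (eval₂ ((C : F →+* F[X]).comp fr) ((X : F[X]) ^ m) ((X : F[X]) ^ n - C lam)) = 0) :
    Rlam F n lam →+* Rlam F n lam :=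
  Ideal.Quotient.lift _
    ((Ideal.Quotient.mk _).comp (eval₂RingHom ((C : F →+* F[X]).comp fr) ((X : F[X]) ^ m)))
    (fun a ha => by
      rw [Ideal.mem_span_singleton] at ha
      obtain ⟨c, rfl⟩ := ha
      simp only [RingHom.comp_apply, coe_eval₂RingHom, map_mul]
      rw [show (Ideal.Quotient.mk (Ideal.span {(X : F[X]) ^ n - C lam}))
            (eval₂ ((C : F →+* F[X]).comp fr) ((X : F[X]) ^ m) ((X : F[X]) ^ n - C lam))
          = rmk F n lam
            (eval₂ ((C : F →+* F[X]).comp fr) ((X : F[X]) ^ m) ((X : F[X]) ^ n - C lam)) from rfl,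
        h0, zero_mul])

theorem SigmaAux_mk {F : Type*} [Field F] (n : ℕ) (lam : F) (fr : F →+* F) (m : ℕ) (h0) (f : F[X]) :
    SigmaAux n lam fr m h0 (rmk F n lam f) =
      rmk F n lam (eval₂ ((C : F →+* F[X]).comp fr) ((X : F[X]) ^ m) f) :=
  rfl

set_option maxHeartbeats 1000000 in
theorem stmt_14 {F : Type*} [Field F] [Fintype F] {p ℓ h n : ℕ} [NeZero n]
    (hp : p.Prime) (hcard : Fintype.card F = p ^ ℓ) (hh : h < ℓ)
    (lam : F) (hlam : lam ≠ 0) (hlam1 : lam ^ (1 + p ^ h) = 1)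
    (ι : (Fin n → F) ≃ₗ[F] Rlam F n lam)
    (hι : ∀ v : Fin n → F,
      ι v = Ideal.Quotient.mk _ (∑ i : Fin n, C (v i) * (X : F[X]) ^ (i : ℕ)))
    (σ : Rlam F n lam → Rlam F n lam)
    (hσ : ∀ f : F[X],
      σ (Ideal.Quotient.mk _ f) =
        Ideal.Quotient.mk _
          (f.sum fun i a => C (a ^ p ^ h) * X ^ ((n * orderOf lam - 1) * i)))
    (g : Rlam F n lam) :
    {x : (Fin n → F) × (Fin n → F) | ∃ u : Rlam F n lam, x = (ι.symm u, ι.symm (u * g))}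
        = {a | ∀ c ∈ {x : (Fin n → F) × (Fin n → F) |
            ∃ u : Rlam F n lam, x = (ι.symm u, ι.symm (u * g))}, gin (p ^ h) c a = 0}
      ↔ g * σ g = -1 := by
  classical
  -- rename things
  set q := p ^ h with hqdef
  set t := orderOf lam with htdef
  set m := n * t - 1 with hmdef
  set K := rmk F n lam with hKdef
  have hι' : ∀ v : Fin n → F,
      ι v = K (∑ i : Fin n, C (v i) * (X : F[X]) ^ (i : ℕ)) := hι
  have hσ' : ∀ f : F[X],
      σ (K f) = K (f.sum fun i a => C (a ^ q) * X ^ (m * i)) := hσ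
  have hKsurj : ∀ z : Rlam F n lam, ∃ f, K f = z := Ideal.Quotient.mk_surjective
  -- characteristic
  have hq0 : q ≠ 0 := pow_ne_zero _ hp.pos.ne'
  obtain ⟨c, hc⟩ := CharP.exists F
  haveI := hc
  have hcprime : c.Prime := CharP.char_is_prime F c
  obtain ⟨k, -, hk⟩ := FiniteField.card F c
  have hpc : p = c := by
    have h1 : p ∣ c ^ (k : ℕ) := by
      rw [← hk, hcard]; exact dvd_pow_self p (by omega)
    exact (Nat.prime_dvd_prime_iff_eq hp hcprime).mp (hp.dvd_of_dvd_pow h1)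
  subst hpc
  haveI : Fact p.Prime := ⟨hp⟩
  haveI : ExpChar F p := ExpChar.prime hp
  have hadd : ∀ x y : F, (x + y) ^ q = x ^ q + y ^ q := fun x y => by
    rw [hqdef]; exact add_pow_char_pow x y p h
  -- basic facts about lam and n*t
  have hfin : IsOfFinOrder lam := isOfFinOrder_iff_pow_eq_one.mpr ⟨1 + q, by positivity, hlam1⟩
  have ht0 : 0 < t := hfin.orderOf_pos
  have hlt : lam ^ t = 1 := pow_orderOf_eq_one lam
  have hn0 : 0 < n := Nat.pos_of_ne_zero (NeZero.ne n)
  have hm : m + 1 = n * t := by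
    have : 0 < n * t := Nat.mul_pos hn0 ht0
    omega
  -- quotient ring basics
  have hxn : K ((X : F[X]) ^ n) = K (C lam) := by
    rw [hKdef]
    rw [show rmk F n lam = Ideal.Quotient.mk (Ideal.span {(X : F[X]) ^ n - C lam}) from rfl]
    rw [Ideal.Quotient.eq]
    exact Ideal.subset_span (Set.mem_singleton _)
  have hxnt : (K (X : F[X])) ^ (n * t) = 1 := by
    rw [pow_mul, ← map_pow, hxn, ← map_pow, ← C_pow, hlt, C_1, map_one]
  have hsmul : ∀ (c : F) (w : Rlam F n lam), c • w = K (C c) * w := by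
    intro c w
    obtain ⟨f, rfl⟩ := hKsurj w
    calc c • K f = K (c • f) := rfl
      _ = K (C c * f) := by rw [Polynomial.smul_eq_C_mul]
      _ = K (C c) * K f := map_mul K _ _
  -- coordinate lemma
  have hcoord : ∀ (r : Fin n) (c : F), ι.symm (K (C c * X ^ (r : ℕ))) = Pi.single r c := by
    intro r c
    have h1 : ι (Pi.single r c) = K (C c * X ^ (r : ℕ)) := by
      rw [hι']
      congr 1
      rw [Finset.sum_eq_single r]
      · simp
      · intro b _ hb
        rw [Pi.single_eq_of_ne hb, map_zero, zero_mul]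
      · intro habs; exact absurd (Finset.mem_univ r) habs
    rw [← h1, LinearEquiv.symm_apply_apply]
  -- delta lemma
  have hdelta : ∀ i j : Fin n,
      ι.symm (K ((X : F[X]) ^ ((i : ℕ) + m * (j : ℕ)))) 0 = if i = j then (1 : F) else 0 := by
    intro i j
    have hntj : n * t * (j : ℕ) = m * (j : ℕ) + (j : ℕ) := by rw [← hm]; ring
    rcases le_or_gt (j : ℕ) (i : ℕ) with hij | hij
    · have hlt' : (i : ℕ) - (j : ℕ) < n := lt_of_le_of_lt (Nat.sub_le _ _) i.isLt
      have hexp : (i : ℕ) + m * (j : ℕ) = ((i : ℕ) - (j : ℕ)) + n * t * (j : ℕ) := by omega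
      have h2 : K ((X : F[X]) ^ ((i : ℕ) + m * (j : ℕ)))
          = K (C (1 : F) * X ^ (((⟨(i : ℕ) - (j : ℕ), hlt'⟩ : Fin n) : ℕ))) := by
        rw [C_1, one_mul]
        rw [show (((⟨(i : ℕ) - (j : ℕ), hlt'⟩ : Fin n) : ℕ)) = (i : ℕ) - (j : ℕ) from rfl]
        calc K ((X : F[X]) ^ ((i : ℕ) + m * (j : ℕ)))
            = (K (X : F[X])) ^ (((i : ℕ) - (j : ℕ)) + n * t * (j : ℕ)) := by
              rw [map_pow, hexp]
          _ = (K (X : F[X])) ^ ((i : ℕ) - (j : ℕ)) * ((K (X : F[X])) ^ (n * t)) ^ (j : ℕ) := by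
              rw [pow_add, pow_mul]
          _ = K ((X : F[X]) ^ ((i : ℕ) - (j : ℕ))) := by
              rw [hxnt, one_pow, mul_one, map_pow]
      rw [h2, hcoord, Pi.single_apply]
      have h3 : ((0 : Fin n) = (⟨(i : ℕ) - (j : ℕ), hlt'⟩ : Fin n)) ↔ i = j := by
        simp only [Fin.ext_iff, Fin.val_zero]
        omega
      rw [if_congr h3 rfl rfl]
    · have hd0 : 0 < (j : ℕ) - (i : ℕ) := by omega
      have hdn : (j : ℕ) - (i : ℕ) < n := lt_of_le_of_lt (Nat.sub_le _ _) j.isLt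
      set d := (j : ℕ) - (i : ℕ) with hddef
      have hA : K ((X : F[X]) ^ ((i : ℕ) + m * (j : ℕ))) * (K (X : F[X])) ^ d = 1 := by
        rw [map_pow, ← pow_add]
        have he : (i : ℕ) + m * (j : ℕ) + d = n * t * (j : ℕ) := by omega
        rw [he, pow_mul, hxnt, one_pow]
      have hBn : n - d < n := by omega
      have hB : K (C (lam ^ (t - 1)) * X ^ (n - d)) * (K (X : F[X])) ^ d = 1 := by
        have he : (n - d) + d = n := by omega
        have he2 : lam ^ (t - 1) * lam = 1 := by
          rw [← pow_succ]
          have he3 : t - 1 + 1 = t := by omega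
          rw [he3, hlt]
        have harg : (C (lam ^ (t - 1)) * X ^ (n - d)) * X ^ d
            = C (lam ^ (t - 1)) * (X : F[X]) ^ n := by
          rw [mul_assoc, ← pow_add, he]
        rw [← map_pow K X d, ← map_mul, harg, map_mul, hxn, ← map_mul, ← C_mul, he2, C_1,
          map_one]
      have hu : IsUnit ((K (X : F[X])) ^ d) :=
        IsUnit.of_mul_eq_one _ (by rw [mul_comm] at hA; exact hA)
      have hAB : K ((X : F[X]) ^ ((i : ℕ) + m * (j : ℕ)))
          = K (C (lam ^ (t - 1)) * X ^ (n - d)) := hu.mul_right_cancel (hA.trans hB.symm)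
      rw [hAB]
      rw [show (n - d) = (((⟨n - d, hBn⟩ : Fin n) : ℕ)) from rfl, hcoord, Pi.single_apply]
      have h1 : ¬((0 : Fin n) = (⟨n - d, hBn⟩ : Fin n)) := by
        simp only [Fin.ext_iff, Fin.val_zero]
        omega
      have h2 : ¬(i = j) := by
        intro hcon
        exact absurd (congrArg Fin.val hcon) (by omega)
      rw [if_neg h1, if_neg h2]
  -- the ring hom fr
  obtain ⟨fr, hfrle⟩ : ∃ fr : F →+* F, ∀ a : F, fr a = a ^ q :=
    ⟨frHom F q hq0 hadd, fun _ => rfl⟩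
  have hlamm : lam ^ m = lam ^ q := by
    have h1 : lam ^ m * lam = 1 := by
      rw [← pow_succ]
      rw [show m + 1 = t * n from hm.trans (Nat.mul_comm n t), pow_mul, hlt, one_pow]
    have h2 : lam ^ q * lam = 1 := by
      rw [← pow_succ, show q + 1 = 1 + q by omega]
      exact hlam1
    exact mul_right_cancel₀ hlam (h1.trans h2.symm)
  have h0 : K (eval₂ ((C : F →+* F[X]).comp fr) ((X : F[X]) ^ m)
      ((X : F[X]) ^ n - C lam)) = 0 := by
    rw [eval₂_sub, eval₂_pow, eval₂_X, eval₂_C, RingHom.comp_apply, hfrle]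
    rw [map_sub, sub_eq_zero]
    calc K (((X : F[X]) ^ m) ^ n) = ((K ((X : F[X]) ^ n))) ^ m := by
          rw [← pow_mul, map_pow, map_pow, ← pow_mul, Nat.mul_comm]
      _ = K (C (lam ^ q)) := by rw [hxn, ← map_pow, ← C_pow, hlamm]
  -- the ring hom Σ'
  obtain ⟨S, hSmk⟩ : ∃ S : Rlam F n lam →+* Rlam F n lam,
      ∀ f : F[X], S (K f) = K (eval₂ ((C : F →+* F[X]).comp fr) ((X : F[X]) ^ m) f) :=
    ⟨SigmaAux n lam fr m h0, fun f => rfl⟩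
  have hSmono : ∀ (c : F) (s : ℕ), S (K (C c * X ^ s)) = K (C (c ^ q) * X ^ (m * s)) := by
    intro c s
    rw [hSmk]
    congr 1
    rw [eval₂_mul, eval₂_C, eval₂_pow, eval₂_X, RingHom.comp_apply, hfrle, pow_mul]
  have hσS : ∀ z : Rlam F n lam, σ z = S z := by
    intro z
    obtain ⟨f, rfl⟩ := hKsurj z
    rw [hσ' f, hSmk]
    congr 1
    rw [eval₂_eq_sum]
    simp only [Polynomial.sum_def]
    exact Finset.sum_congr rfl fun i _ => by
      rw [RingHom.comp_apply, hfrle, pow_mul]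
  -- KEY inner-product lemma
  have hkey : ∀ u v : Rlam F n lam,
      (∑ i, ι.symm u i * (ι.symm v i) ^ q) = ι.symm (u * S v) 0 := by
    intro u v
    have hu : u = K (∑ i : Fin n, C (ι.symm u i) * (X : F[X]) ^ (i : ℕ)) := by
      conv_lhs => rw [← ι.apply_symm_apply u, hι']
    have hv : v = K (∑ j : Fin n, C (ι.symm v j) * (X : F[X]) ^ (j : ℕ)) := by
      conv_lhs => rw [← ι.apply_symm_apply v, hι']
    set a := ι.symm u with hadef
    set b := ι.symm v with hbdef
    rw [hu, hv]
    rw [map_sum K, map_sum K, map_sum S]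
    simp only [hSmono]
    rw [Finset.sum_mul_sum]
    have hterm : ∀ i j : Fin n,
        K (C (a i) * X ^ (i : ℕ)) * K (C ((b j) ^ q) * X ^ (m * (j : ℕ)))
          = (a i * (b j) ^ q) • K ((X : F[X]) ^ ((i : ℕ) + m * (j : ℕ))) := by
      intro i j
      rw [← map_mul, hsmul, ← map_mul]
      congr 1
      rw [C_mul, pow_add]
      ring
    simp only [hterm]
    simp only [map_sum, map_smul, Finset.sum_apply, Pi.smul_apply, smul_eq_mul]
    simp only [hdelta]
    simp [mul_ite, mul_one, mul_zero, Finset.sum_ite_eq]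
  -- surjectivity of x ↦ x^q on F
  have hfrsurj : ∀ a : F, ∃ b : F, b ^ q = a := by
    have hinj : Function.Injective (fun x : F => x ^ q) := by
      intro x y hxy
      have h1 : (x - y) ^ q = 0 := by
        rw [hqdef, sub_pow_char_pow]
        simp only at hxy
        rw [← hqdef, hxy, sub_self]
      have h2 : x - y = 0 := by
        exact pow_eq_zero_iff hq0 |>.mp h1
      exact sub_eq_zero.mp h2
    intro a
    exact Finite.injective_iff_surjective.mp hinj a
  -- S is surjective
  have hSsurj : Function.Surjective S := by
    intro w
    obtain ⟨f, rfl⟩ := hKsurj w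
    induction f using Polynomial.induction_on' with
    | add pp qq hpp hqq =>
      obtain ⟨u, hu⟩ := hpp
      obtain ⟨v, hv⟩ := hqq
      exact ⟨u + v, by rw [map_add, hu, hv, ← map_add]⟩
    | monomial k a =>
      obtain ⟨b, hb⟩ := hfrsurj a
      refine ⟨K (C b * X ^ (m * k)), ?_⟩
      rw [hSmono, hb, ← Polynomial.C_mul_X_pow_eq_monomial, map_mul, map_mul]
      congr 1
      have hexp : m * (m * k) + n * t * k = n * t * (m * k) + k := by
        have h1 : n * t = m + 1 := hm.symm
        rw [h1]
        ring
      calc K ((X : F[X]) ^ (m * (m * k)))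
          = K ((X : F[X]) ^ (m * (m * k))) * ((K (X : F[X])) ^ (n * t)) ^ k := by
            rw [hxnt, one_pow, mul_one]
        _ = (K (X : F[X])) ^ (m * (m * k) + n * t * k) := by
            rw [map_pow, ← pow_mul, ← pow_add]
        _ = (K (X : F[X])) ^ (n * t * (m * k) + k) := by rw [hexp]
        _ = ((K (X : F[X])) ^ (n * t)) ^ (m * k) * (K (X : F[X])) ^ k := by
            rw [pow_add, pow_mul]
        _ = K ((X : F[X]) ^ k) := by rw [hxnt, one_pow, one_mul, map_pow]
  haveI : Finite (Rlam F n lam) := Finite.of_equiv _ ι.toEquiv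
  have hSinj : Function.Injective S := Finite.injective_iff_surjective.mpr hSsurj
  -- nondegeneracy
  have hnd : ∀ w : Rlam F n lam, (∀ u, ι.symm (u * w) 0 = 0) → w = 0 := by
    intro w hw
    obtain ⟨v, rfl⟩ := hSsurj w
    have hv0 : ι.symm v = 0 := by
      funext k'
      have h1 := hw (ι (Pi.single k' 1))
      rw [← hkey, LinearEquiv.symm_apply_apply] at h1
      rw [Finset.sum_eq_single k'] at h1
      · rw [Pi.single_eq_same, one_mul] at h1
        have := pow_eq_zero_iff hq0 |>.mp h1
        simpa using this
      · intro bb _ hbb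
        rw [Pi.single_eq_of_ne hbb, zero_mul]
      · intro habs; exact absurd (Finset.mem_univ k') habs
    have hv : v = 0 := by
      have := congrArg ι (congrArg id hv0)
      simpa [LinearEquiv.apply_symm_apply] using congrArg ι hv0
    rw [hv, map_zero]
  -- inner product formula
  have hgin : ∀ (u : Rlam F n lam) (a : (Fin n → F) × (Fin n → F)),
      gin q (ι.symm u, ι.symm (u * g)) a
        = ι.symm (u * (S (ι a.1) + g * S (ι a.2))) 0 := by
    intro u a
    have e1 := hkey u (ι a.1)
    have e2 := hkey (u * g) (ι a.2)
    rw [LinearEquiv.symm_apply_apply] at e1 e2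
    show (∑ i, ι.symm u i * a.1 i ^ q) + (∑ i, ι.symm (u * g) i * a.2 i ^ q)
        = ι.symm (u * (S (ι a.1) + g * S (ι a.2))) 0
    rw [e1, e2]
    have h3 : u * S (ι a.1) + u * g * S (ι a.2) = u * (S (ι a.1) + g * S (ι a.2)) := by ring
    rw [← Pi.add_apply, ← map_add, h3]
  -- main equivalence
  constructor
  · intro hEq
    have hmem : ((ι.symm (1 : Rlam F n lam), ι.symm ((1 : Rlam F n lam) * g))
        ∈ {x : (Fin n → F) × (Fin n → F) |
            ∃ u : Rlam F n lam, x = (ι.symm u, ι.symm (u * g))}) := ⟨1, rfl⟩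
    rw [hEq] at hmem
    have hall : ∀ u : Rlam F n lam,
        ι.symm (u * (S (ι (ι.symm 1)) + g * S (ι (ι.symm (1 * g))))) 0 = 0 := by
      intro u
      have h4 := hmem (ι.symm u, ι.symm (u * g)) ⟨u, rfl⟩
      rw [← h4, hgin u (ι.symm (1 : Rlam F n lam), ι.symm ((1 : Rlam F n lam) * g))]
    have h1 : S (ι (ι.symm 1)) + g * S (ι (ι.symm (1 * g))) = 0 := hnd _ hall
    rw [LinearEquiv.apply_symm_apply, LinearEquiv.apply_symm_apply, one_mul, map_one] at h1
    rw [hσS g]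
    exact eq_neg_of_add_eq_zero_right h1
  · intro hg
    rw [hσS g] at hg
    ext a
    simp only [Set.mem_setOf_eq]
    constructor
    · rintro ⟨u, rfl⟩ c hc
      obtain ⟨v, rfl⟩ := hc
      rw [hgin v (ι.symm u, ι.symm (u * g)), LinearEquiv.apply_symm_apply,
        LinearEquiv.apply_symm_apply, map_mul S u g]
      have h5 : S u + g * (S u * S g) = S u * (1 + g * S g) := by ring
      rw [h5, hg, add_neg_cancel, mul_zero, mul_zero, map_zero]
      rfl
    · intro hc
      have hall : ∀ u : Rlam F n lam, ι.symm (u * (S (ι a.1) + g * S (ι a.2))) 0 = 0 := by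
        intro u
        rw [← hgin u a]
        exact hc _ ⟨u, rfl⟩
      have h2 : S (ι a.1) + g * S (ι a.2) = 0 := hnd _ hall
      have hb : ι a.2 = ι a.1 * g := by
        apply hSinj
        rw [map_mul]
        have h3 : S (ι a.1) = -(g * S (ι a.2)) := eq_neg_of_add_eq_zero_left h2
        rw [h3]
        calc S (ι a.2) = -(g * S g) * S (ι a.2) := by rw [hg]; ring
          _ = -(g * S (ι a.2)) * S g := by ring
      refine ⟨ι a.1, ?_⟩
      have ha1 : a.1 = ι.symm (ι a.1) := (LinearEquiv.symm_apply_apply ι a.1).symm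
      have ha2 : a.2 = ι.symm (ι a.1 * g) := by rw [← hb, LinearEquiv.symm_apply_apply]
      exact Prod.ext ha1 ha2
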